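/- arXiv:2106.06935 — 6 statements merged into one kernel-verified Lean document; each statement's English description precedes it below -/
import Mathlib

section
/- (Katz index is a path formulation with ⊕ = +, ⊗ = × and edge representation β·w_e.) For all vertices u, v : V, the Katz index Katz(u,v) := ∑'_{t : ℕ} β^(t+1) * ((w^(t+1)) u v) (the sum over all t ≥ 1 of β^t times the (u,v) entry of the t-th matrix power of w) equals the sum over all walks of positive length from u to v of the product of damped edge weights: Katz(u,v) = ∑' over the sigma type Σ (k : ℕ), {p : Fin (k+2) → V // p 0 = u ∧ p (Fin.last (k+1)) = v} of ∏_{i=0}^{k} (β * w (p i) (p (i+1))). -/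
open ENNReal

private lemma pow_entry {V : Type*} [Fintype V] [DecidableEq V] (w : Matrix V V ℝ≥0∞) :
    ∀ (n : ℕ) (u v : V), (w ^ n) u v =
      ∑ p : {p : Fin (n + 1) → V // p 0 = u ∧ p (Fin.last n) = v},
        ∏ i : Fin n, w (p.1 i.castSucc) (p.1 i.succ) := by
  intro n
  induction n with
  | zero =>
    intro u v
    simp only [pow_zero, Matrix.one_apply]
    by_cases h : u = v
    · subst h
      rw [if_pos rfl]
      haveI : Unique {p : Fin 1 → V // p 0 = u ∧ p (Fin.last 0) = u} :=
        ⟨⟨⟨fun _ => u, rfl, rfl⟩⟩, by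
          rintro ⟨p, h1, h2⟩
          apply Subtype.ext
          funext i
          fin_cases i
          exact h1⟩
      rw [Fintype.sum_unique]; simp
    · rw [if_neg h]
      haveI : IsEmpty {p : Fin 1 → V // p 0 = u ∧ p (Fin.last 0) = v} := by
        constructor
        rintro ⟨p, h1, h2⟩
        exact h (h1 ▸ h2 ▸ rfl)
      rw [Fintype.sum_empty]
  | succ n ih =>
    intro u v
    rw [pow_succ', Matrix.mul_apply]
    let e : {p : Fin (n + 2) → V // p 0 = u ∧ p (Fin.last (n + 1)) = v} ≃
        Σ x : V, {p : Fin (n + 1) → V // p 0 = x ∧ p (Fin.last n) = v} :=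
      { toFun := fun p => ⟨p.1 (Fin.succ 0), fun i => p.1 i.succ, rfl, by
          show p.1 (Fin.last n).succ = v
          rw [Fin.succ_last]; exact p.2.2⟩
        invFun := fun q => ⟨Fin.cases u q.2.1, Fin.cases_zero, by
          show Fin.cases u q.2.1 (Fin.last (n + 1)) = v
          rw [← Fin.succ_last, Fin.cases_succ]; exact q.2.2.2⟩
        left_inv := by
          rintro ⟨p, h1, h2⟩
          apply Subtype.ext
          funext i
          induction i using Fin.cases with
          | zero => exact h1.symm
          | succ i => rfl
        right_inv := by
          rintro ⟨x, p, h1, h2⟩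
          subst h1
          rfl }
    rw [← Equiv.sum_comp e.symm, ← Finset.univ_sigma_univ, Finset.sum_sigma]
    apply Finset.sum_congr rfl
    intro x _
    rw [ih x v, Finset.mul_sum]
    apply Finset.sum_congr rfl
    intro p _
    show w u x * _ = ∏ i : Fin (n + 1),
      w ((fun j => (Fin.cases u p.1 : Fin (n + 2) → V) j) i.castSucc)
        ((fun j => (Fin.cases u p.1 : Fin (n + 2) → V) j) i.succ)
    rw [Fin.prod_univ_succ]
    congr 1
    · have h1 : (Fin.cases u p.1 : Fin (n + 2) → V) (Fin.succ 0) = p.1 0 :=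
        Fin.cases_succ 0
      rw [Fin.succ_zero_eq_one] at h1
      simp [h1, p.2.1]

theorem katz_eq_sum_over_paths {V : Type*} [Fintype V] [DecidableEq V]
    (w : Matrix V V ℝ≥0∞) (β : ℝ≥0∞) (u v : V) :
    (∑' t : ℕ, β ^ (t + 1) * (w ^ (t + 1)) u v) =
      ∑' q : (Σ k : ℕ, {p : Fin (k + 2) → V // p 0 = u ∧ p (Fin.last (k + 1)) = v}),
        ∏ i : Fin (q.1 + 1), β * w (q.2.1 i.castSucc) (q.2.1 i.succ) := by
  rw [ENNReal.tsum_sigma']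
  apply tsum_congr
  intro k
  rw [tsum_fintype, pow_entry w (k + 1) u v, Finset.mul_sum]
  apply Finset.sum_congr rfl
  intro p _
  rw [Finset.prod_mul_distrib, Finset.prod_const, Finset.card_univ, Fintype.card_fin]
end

section
/- (Graph distance is solved by the generalized Bellman–Ford algorithm with ⊕ = min, ⊗ = +.) For every natural number t and all vertices u, v : V, the (min, +) Bellman–Ford iterate equals the infimum over all walks of length at most t of the total edge length: d_t u v = ⨅_{k ∈ Finset.range (t+1)} ⨅ over all walks p of length k from u to v of ∑_{i=0}^{k-1} w (p i) (p (i+1)) (the empty sum for k = 0 is 0, and the infimum over an empty set of walks is ∞). -/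
open ENNReal

/-- The (min, +) generalized Bellman–Ford iterates for graph distance:
`d 0 u v = if u = v then 0 else ∞` and
`d (t+1) u v = min (⨅ x, d t u x + w x v) (d 0 u v)`. -/
noncomputable def minPlusBF {V : Type*} [Fintype V] [DecidableEq V]
    (w : Matrix V V ℝ≥0∞) : ℕ → V → V → ℝ≥0∞
  | 0 => fun u v => if u = v then 0 else ∞
  | t + 1 => fun u v =>
      min (⨅ x : V, minPlusBF w t u x + w x v) (if u = v then 0 else ∞)

noncomputable def walkCost {V : Type*} [Fintype V] [DecidableEq V]
    (w : Matrix V V ℝ≥0∞) (k : ℕ) (u v : V) : ℝ≥0∞ :=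
  ⨅ p : {p : Fin (k + 1) → V // p 0 = u ∧ p (Fin.last k) = v},
    ∑ i : Fin k, w (p.1 i.castSucc) (p.1 i.succ)

lemma walkCost_zero {V : Type*} [Fintype V] [DecidableEq V]
    (w : Matrix V V ℝ≥0∞) (u v : V) :
    walkCost w 0 u v = if u = v then 0 else ∞ := by
  unfold walkCost
  split_ifs with h
  · subst h
    refine le_antisymm (iInf_le_of_le ⟨fun _ => u, rfl, rfl⟩ ?_) zero_le
    simp
  · have : IsEmpty {p : Fin 1 → V // p 0 = u ∧ p (Fin.last 0) = v} :=
      ⟨fun ⟨p, h0, h1⟩ => h (h0.symm.trans h1)⟩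
    exact iInf_of_empty _

lemma walkCost_succ {V : Type*} [Fintype V] [DecidableEq V]
    (w : Matrix V V ℝ≥0∞) (k : ℕ) (u v : V) :
    walkCost w (k + 1) u v = ⨅ x : V, walkCost w k u x + w x v := by
  unfold walkCost
  apply le_antisymm
  · refine le_iInf fun x => ?_
    rw [ENNReal.iInf_add]
    refine le_iInf fun q => ?_
    obtain ⟨q, hq0, hqk⟩ := q
    refine iInf_le_of_le ⟨Fin.snoc q v,
      by rw [← Fin.castSucc_zero, Fin.snoc_castSucc]; exact hq0, by simp⟩ ?_
    rw [Fin.sum_univ_castSucc]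
    simp [Fin.succ_castSucc, Fin.snoc_castSucc, Fin.succ_last, Fin.snoc_last, hqk, -Fin.castSucc_succ]
  · refine le_iInf fun pp => ?_
    obtain ⟨p, hp0, hpk⟩ := pp
    refine iInf_le_of_le (p (Fin.last k).castSucc) ?_
    have hcost : (⨅ q : {q : Fin (k+1) → V // q 0 = u ∧ q (Fin.last k) = p (Fin.last k).castSucc},
          ∑ i : Fin k, w (q.1 i.castSucc) (q.1 i.succ))
        ≤ ∑ i : Fin k, w (p i.castSucc.castSucc) (p i.castSucc.succ) :=
      iInf_le_of_le ⟨fun i => p i.castSucc, hp0, rfl⟩ le_rfl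
    refine le_trans (add_le_add_left hcost _) ?_
    rw [Fin.sum_univ_castSucc]
    simp only [Fin.succ_last, hpk]
    exact le_rfl

lemma peel_zero (f : ℕ → ℝ≥0∞) (n : ℕ) :
    ⨅ k ∈ Finset.range (n + 1), f k = f 0 ⊓ ⨅ k ∈ Finset.range n, f (k + 1) := by
  apply le_antisymm
  · refine le_inf (iInf₂_le 0 (by simp)) (le_iInf₂ fun k hk => iInf₂_le (k + 1) ?_)
    simp at hk ⊢; omega
  · refine le_iInf₂ fun k hk => ?_
    match k with
    | 0 => exact inf_le_left
    | m + 1 =>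
      refine inf_le_right.trans (iInf₂_le m ?_)
      simp at hk ⊢; omega

theorem minPlusBF_eq_inf_over_short_walks {V : Type*} [Fintype V] [DecidableEq V]
    (w : Matrix V V ℝ≥0∞) (t : ℕ) (u v : V) :
    minPlusBF w t u v =
      ⨅ k ∈ Finset.range (t + 1),
        ⨅ p : {p : Fin (k + 1) → V // p 0 = u ∧ p (Fin.last k) = v},
          ∑ i : Fin k, w (p.1 i.castSucc) (p.1 i.succ) := by
  induction t generalizing v with
  | zero =>
    show minPlusBF w 0 u v = ⨅ k ∈ Finset.range 1, walkCost w k u v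
    simp [minPlusBF, walkCost_zero]
  | succ t ih =>
    show minPlusBF w (t + 1) u v = ⨅ k ∈ Finset.range (t + 2), walkCost w k u v
    rw [peel_zero (fun k => walkCost w k u v), walkCost_zero]
    show min _ _ = _
    rw [min_comm]
    congr 1
    calc ⨅ x : V, minPlusBF w t u x + w x v
        = ⨅ x : V, ⨅ k ∈ Finset.range (t + 1), (walkCost w k u x + w x v) := by
          refine iInf_congr fun x => ?_
          rw [show minPlusBF w t u x = ⨅ k ∈ Finset.range (t + 1), walkCost w k u x from ih x]
          simp only [ENNReal.iInf_add]
      _ = ⨅ k ∈ Finset.range (t + 1), ⨅ x : V, (walkCost w k u x + w x v) := by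
          rw [iInf_comm]
          exact iInf_congr fun k => iInf_comm
      _ = ⨅ k ∈ Finset.range (t + 1), walkCost w (k + 1) u v :=
          iInf_congr fun k => iInf_congr fun _ => (walkCost_succ w k u v).symm
end

section
/- (Graph distance can be solved via the generalized Bellman–Ford algorithm.) For all vertices u, v : V, the (min, +) Bellman–Ford iterates are entrywise antitone in t and converge to the graph distance, i.e., ⨅_{t : ℕ} (d_t u v) = ⨅_{k : ℕ} ⨅ over all walks p of length k from u to v of ∑_{i=0}^{k-1} w (p i) (p (i+1)) (the infimum over all walks of any length of the total edge length, which is ∞ when no walk exists). -/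
open ENNReal

noncomputable def Wsum {V : Type*} [Fintype V]
    (w : Matrix V V ℝ≥0∞) (k : ℕ) (u v : V) : ℝ≥0∞ :=
  ⨅ p : {p : Fin (k + 1) → V // p 0 = u ∧ p (Fin.last k) = v},
    ∑ i : Fin k, w (p.1 i.castSucc) (p.1 i.succ)

lemma Wsum_self {V : Type*} [Fintype V] (w : Matrix V V ℝ≥0∞) (k : ℕ) (u : V) :
    Wsum w 0 u u ≤ 0 := by
  apply iInf_le_of_le ⟨fun _ => u, rfl, rfl⟩
  simp

lemma bf_antitone_succ {V : Type*} [Fintype V] [DecidableEq V]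
    (w : Matrix V V ℝ≥0∞) : ∀ t (u v : V), minPlusBF w (t + 1) u v ≤ minPlusBF w t u v := by
  intro t
  induction t with
  | zero => intro u v; exact min_le_right _ _
  | succ t ih =>
    intro u v
    refine min_le_min ?_ le_rfl
    exact iInf_mono fun x => add_le_add_left (ih u x) _

lemma bf_le_Wsum {V : Type*} [Fintype V] [DecidableEq V]
    (w : Matrix V V ℝ≥0∞) : ∀ k (u v : V), minPlusBF w k u v ≤ Wsum w k u v := by
  intro k
  induction k with
  | zero =>
    intro u v
    refine le_iInf fun p => ?_
    obtain ⟨p, hp0, hpl⟩ := p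
    have : u = v := hp0 ▸ hpl ▸ rfl
    simp [minPlusBF, this]
  | succ k ih =>
    intro u v
    refine le_iInf fun p => ?_
    obtain ⟨p, hp0, hpl⟩ := p
    set x := p (Fin.last k).castSucc with hx
    refine le_trans (min_le_left _ _) ?_
    refine le_trans (iInf_le _ x) ?_
    have hq : minPlusBF w k u x ≤ ∑ i : Fin k, w (p i.castSucc.castSucc) (p i.castSucc.succ) := by
      refine le_trans (ih u x) ?_
      refine iInf_le_of_le ⟨fun i => p i.castSucc, by simp [hp0], rfl⟩ ?_
      exact le_of_eq rfl
    calc minPlusBF w k u x + w x v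
        ≤ (∑ i : Fin k, w (p i.castSucc.castSucc) (p i.castSucc.succ)) + w x v :=
          add_le_add_left hq _
      _ = ∑ i : Fin (k + 1), w (p i.castSucc) (p i.succ) := by
          rw [Fin.sum_univ_castSucc]
          congr 1
          · rw [hx, ← hpl, Fin.succ_last]
      _ ≤ _ := le_rfl

lemma Wsum_succ_le {V : Type*} [Fintype V]
    (w : Matrix V V ℝ≥0∞) (k : ℕ) (u x v : V) :
    Wsum w (k + 1) u v ≤ Wsum w k u x + w x v := by
  simp only [Wsum]
  rw [ENNReal.iInf_add]
  refine le_iInf fun q => ?_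
  obtain ⟨q, hq0, hql⟩ := q
  have h0 : (Fin.snoc q v : Fin (k + 2) → V) 0 = u := by
    have h : ((0 : Fin (k + 1)).castSucc) = (0 : Fin (k + 2)) := rfl
    rw [← h, Fin.snoc_castSucc, hq0]
  have hl : (Fin.snoc q v : Fin (k + 2) → V) (Fin.last (k + 1)) = v := Fin.snoc_last _ _
  refine iInf_le_of_le ⟨Fin.snoc q v, h0, hl⟩ (le_of_eq ?_)
  simp only
  rw [Fin.sum_univ_castSucc]
  congr 1
  · apply Finset.sum_congr rfl
    intro i _
    rw [Fin.succ_castSucc]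
    simp [Fin.succ_castSucc, -Fin.castSucc_succ]
  · simp [hql]

lemma Wsum_le_bf {V : Type*} [Fintype V] [DecidableEq V]
    (w : Matrix V V ℝ≥0∞) : ∀ t (u v : V), (⨅ k, Wsum w k u v) ≤ minPlusBF w t u v := by
  have base : ∀ u v : V, (⨅ k, Wsum w k u v) ≤ if u = v then 0 else ∞ := by
    intro u v
    by_cases h : u = v
    · subst h
      simp only [if_pos rfl]
      exact le_trans (iInf_le _ 0) (Wsum_self w 0 u)
    · simp [h]
  intro t
  induction t with
  | zero => exact base
  | succ t ih =>
    intro u v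
    refine le_min ?_ (base u v)
    refine le_iInf fun x => ?_
    calc (⨅ k, Wsum w k u v) ≤ ⨅ k, Wsum w (k + 1) u v :=
          le_iInf fun k => iInf_le _ (k + 1)
      _ ≤ ⨅ k, (Wsum w k u x + w x v) := iInf_mono fun k => Wsum_succ_le w k u x v
      _ = (⨅ k, Wsum w k u x) + w x v := (ENNReal.iInf_add).symm
      _ ≤ minPlusBF w t u x + w x v := add_le_add_left (ih u x) _

theorem minPlusBF_antitone_and_iInf_eq_graph_distance {V : Type*} [Fintype V] [DecidableEq V]
    (w : Matrix V V ℝ≥0∞) (u v : V) :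
    Antitone (fun t : ℕ => minPlusBF w t u v) ∧
      (⨅ t : ℕ, minPlusBF w t u v) =
        ⨅ k : ℕ, ⨅ p : {p : Fin (k + 1) → V // p 0 = u ∧ p (Fin.last k) = v},
          ∑ i : Fin k, w (p.1 i.castSucc) (p.1 i.succ) := by
  constructor
  · exact antitone_nat_of_succ_le fun t => bf_antitone_succ w t u v
  · apply le_antisymm
    · exact le_iInf fun k => le_trans (iInf_le _ k) (bf_le_Wsum w k u v)
    · exact le_iInf fun t => Wsum_le_bf w t u v
end

section
/- (At most |V| Bellman–Ford iterations are needed for graph distance, since only simple paths matter.) For all vertices u, v : V, the infimum of total length over all walks of any length equals the infimum restricted to walks of length at most Fintype.card V - 1: ⨅_{k : ℕ} ⨅ over all walks p of length k from u to v of ∑_{i=0}^{k-1} w (p i) (p (i+1)) = ⨅_{k ∈ Finset.range (Fintype.card V)} ⨅ over all walks p of length k from u to v of ∑_{i=0}^{k-1} w (p i) (p (i+1)). -/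
open ENNReal

lemma graph_cut_one_cycle {V : Type*} (w : Matrix V V ℝ≥0∞)
    (k : ℕ) (p : Fin (k + 1) → V) (i j : Fin (k + 1)) (hij : i < j) (hpij : p i = p j) :
    ∃ (k' : ℕ) (q : Fin (k' + 1) → V), k' < k ∧ q 0 = p 0 ∧ q (Fin.last k') = p (Fin.last k) ∧
      ∑ m : Fin k', w (q m.castSucc) (q m.succ) ≤
        ∑ m : Fin k, w (p m.castSucc) (p m.succ) := by
  obtain ⟨a, ha⟩ := i
  obtain ⟨b, hb⟩ := j
  simp only [Fin.mk_lt_mk] at hij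
  have hbk : b ≤ k := by omega
  set k' := k - (b - a) with hk'
  have hak' : a ≤ k' := by omega
  set q : Fin (k' + 1) → V := fun m =>
    if m.val ≤ a then p ⟨m.val, by omega⟩
    else p ⟨m.val + (b - a), by have := m.isLt; omega⟩ with hq
  set f : Fin k' → Fin k := fun m =>
    if m.val < a then ⟨m.val, by omega⟩
    else ⟨m.val + (b - a), by have := m.isLt; omega⟩ with hf
  have hc1 : ∀ m : Fin k', q m.castSucc = p ((f m).castSucc) := by
    intro m
    have hmlt := m.isLt
    by_cases h : m.val < a
    · simp only [hq, hf]
      rw [if_pos (show (m.castSucc).val ≤ a by simpa using h.le), if_pos h]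
      congr 1
    · simp only [hq, hf]
      rw [if_neg h]
      by_cases h' : m.val = a
      · rw [if_pos (show (m.castSucc).val ≤ a by simpa using h'.le)]
        trans p (⟨a, ha⟩ : Fin (k + 1))
        · congr 1; apply Fin.ext; simpa
        · rw [hpij]; congr 1; apply Fin.ext; simp; omega
      · rw [if_neg (show ¬ (m.castSucc).val ≤ a by simp; omega)]
        congr 1
  have hc2 : ∀ m : Fin k', q m.succ = p ((f m).succ) := by
    intro m
    have hmlt := m.isLt
    by_cases h : m.val < a
    · simp only [hq, hf]
      rw [if_pos (show (m.succ).val ≤ a by simp; omega), if_pos h]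
      congr 1
    · simp only [hq, hf]
      rw [if_neg h, if_neg (show ¬ (m.succ).val ≤ a by simp; omega)]
      congr 1
      apply Fin.ext; simp; omega
  have hfinj : ∀ x ∈ Finset.univ, ∀ y ∈ Finset.univ, f x = f y → x = y := by
    intro x _ y _ hxy
    have h' : (f x).val = (f y).val := congrArg Fin.val hxy
    simp only [hf, apply_ite Fin.val] at h'
    apply Fin.ext
    split_ifs at h' <;> omega
  refine ⟨k', q, by omega, ?_, ?_, ?_⟩
  · simp only [hq]
    rw [if_pos (by simp)]
    congr 1
  · by_cases hc : k' ≤ a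
    · have hka : k' = a := le_antisymm hc hak'
      have hkb : k = b := by omega
      simp only [hq, Fin.last]
      rw [if_pos (by simpa using hc)]
      trans p (⟨a, ha⟩ : Fin (k + 1))
      · congr 1; apply Fin.ext; simpa
      · rw [hpij]; congr 1; apply Fin.ext; simp; omega
    · simp only [hq, Fin.last]
      rw [if_neg (by simpa using hc)]
      congr 1
      apply Fin.ext; simp; omega
  · calc ∑ m : Fin k', w (q m.castSucc) (q m.succ)
        = ∑ m : Fin k', w (p (f m).castSucc) (p (f m).succ) :=
          Finset.sum_congr rfl fun m _ => by rw [hc1 m, hc2 m]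
      _ = ∑ t ∈ Finset.univ.image f, w (p t.castSucc) (p t.succ) :=
          (Finset.sum_image (f := fun t : Fin k => w (p t.castSucc) (p t.succ)) hfinj).symm
      _ ≤ ∑ t : Fin k, w (p t.castSucc) (p t.succ) :=
          Finset.sum_le_sum_of_subset (Finset.subset_univ _)

lemma graph_reduce_walk {V : Type*} [Fintype V] (w : Matrix V V ℝ≥0∞) :
    ∀ (k : ℕ) (p : Fin (k + 1) → V), ∃ (k' : ℕ) (q : Fin (k' + 1) → V),
      k' < Fintype.card V ∧ q 0 = p 0 ∧ q (Fin.last k') = p (Fin.last k) ∧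
      ∑ m : Fin k', w (q m.castSucc) (q m.succ) ≤
        ∑ m : Fin k, w (p m.castSucc) (p m.succ) := by
  intro k
  induction k using Nat.strong_induction_on with
  | _ k ih =>
    intro p
    by_cases hk : k < Fintype.card V
    · exact ⟨k, p, hk, rfl, rfl, le_rfl⟩
    · have hcard : Fintype.card V < Fintype.card (Fin (k + 1)) := by
        simp only [Fintype.card_fin]; omega
      obtain ⟨i, j, hne, hpij⟩ := Fintype.exists_ne_map_eq_of_card_lt p hcard
      have key : ∃ (i' j' : Fin (k + 1)), i' < j' ∧ p i' = p j' := by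
        rcases lt_or_gt_of_ne hne with h | h
        · exact ⟨i, j, h, hpij⟩
        · exact ⟨j, i, h, hpij.symm⟩
      obtain ⟨i', j', hlt, hp'⟩ := key
      obtain ⟨k'', q, hk'', h0, hl, hsum⟩ := graph_cut_one_cycle w k p i' j' hlt hp'
      obtain ⟨k', r, hk', h0', hl', hsum'⟩ := ih k'' hk'' q
      exact ⟨k', r, hk', h0'.trans h0, hl'.trans hl, hsum'.trans hsum⟩

theorem graph_distance_restricted_to_simple_paths {V : Type*} [Fintype V] [DecidableEq V]
    (w : Matrix V V ℝ≥0∞) (u v : V) :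
    (⨅ k : ℕ, ⨅ p : {p : Fin (k + 1) → V // p 0 = u ∧ p (Fin.last k) = v},
        ∑ i : Fin k, w (p.1 i.castSucc) (p.1 i.succ)) =
      ⨅ k ∈ Finset.range (Fintype.card V),
        ⨅ p : {p : Fin (k + 1) → V // p 0 = u ∧ p (Fin.last k) = v},
          ∑ i : Fin k, w (p.1 i.castSucc) (p.1 i.succ) := by
  apply le_antisymm
  · exact le_iInf fun k => le_iInf fun hk => iInf_le _ k
  · refine le_iInf fun k => le_iInf fun p => ?_
    obtain ⟨k', q, hk', h0, hl, hsum⟩ := graph_reduce_walk w k p.1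
    calc (⨅ k ∈ Finset.range (Fintype.card V),
            ⨅ p : {p : Fin (k + 1) → V // p 0 = u ∧ p (Fin.last k) = v},
              ∑ i : Fin k, w (p.1 i.castSucc) (p.1 i.succ))
        ≤ ⨅ p : {p : Fin (k' + 1) → V // p 0 = u ∧ p (Fin.last k') = v},
              ∑ i : Fin k', w (p.1 i.castSucc) (p.1 i.succ) :=
          iInf₂_le k' (Finset.mem_range.mpr hk')
      _ ≤ ∑ i : Fin k', w (q i.castSucc) (q i.succ) :=
          iInf_le (ι := {p : Fin (k' + 1) → V // p 0 = u ∧ p (Fin.last k') = v}) _ ⟨q, h0.trans p.2.1, hl.trans p.2.2⟩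
      _ ≤ ∑ i : Fin k, w (p.1 i.castSucc) (p.1 i.succ) := hsum
end

section
/- (At most |V| Bellman–Ford iterations are needed for the widest path, since only simple paths matter.) For all vertices u, v : V, the supremum over all walks of any length of the minimum edge capacity along the walk equals the supremum restricted to walks of length at most Fintype.card V - 1: ⨆_{k : ℕ} ⨆ over all walks p of length k from u to v of ⨅_{i=0}^{k-1} w (p i) (p (i+1)) = ⨆_{k ∈ Finset.range (Fintype.card V)} ⨆ over all walks p of length k from u to v of ⨅_{i=0}^{k-1} w (p i) (p (i+1)), where the empty infimum for k = 0 is ∞. -/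
open ENNReal

section Aux

variable {V : Type*} [Fintype V] [DecidableEq V]

private noncomputable def wcost (w : Matrix V V ℝ≥0∞) (q : ℕ → V) (k : ℕ) : ℝ≥0∞ :=
  ⨅ m ∈ Finset.range k, w (q m) (q (m + 1))

private noncomputable def wsup (w : Matrix V V ℝ≥0∞) (u v : V) (k : ℕ) : ℝ≥0∞ :=
  ⨆ q : {q : ℕ → V // q 0 = u ∧ q k = v}, wcost w q.1 k

omit [Fintype V] [DecidableEq V] in
private lemma shortcut (w : Matrix V V ℝ≥0∞) (u v : V) (q : ℕ → V) (k i j : ℕ)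
    (h0 : q 0 = u) (hk : q k = v) (hij : i < j) (hjk : j ≤ k) (hq : q i = q j) :
    wcost w q k ≤ wsup w u v (k - (j - i)) := by
  set d := j - i with hd
  set k' := k - d with hk'
  set q' : ℕ → V := fun n => if n ≤ i then q n else q (n + d) with hq'def
  have hq'0 : q' 0 = u := by simp [hq'def, h0]
  have hq'k : q' k' = v := by
    by_cases h : k' ≤ i
    · have hk'i : k' = i := le_antisymm h (by omega)
      have hkj : k = j := by omega
      simp only [hq'def, hk'i, if_pos le_rfl, hq]
      rw [← hkj, hk]
    · simp only [hq'def, if_neg h]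
      have : k' + d = k := by omega
      rw [this, hk]
  refine le_trans ?_ (le_iSup (fun q : {q : ℕ → V // q 0 = u ∧ q k' = v} => wcost w q.1 k')
    ⟨q', hq'0, hq'k⟩)
  refine le_iInf₂ fun m hm => ?_
  rw [Finset.mem_range] at hm
  show wcost w q k ≤ w (q' m) (q' (m + 1))
  by_cases h1 : m < i
  · have e1 : q' m = q m := if_pos (by omega)
    have e2 : q' (m + 1) = q (m + 1) := if_pos (by omega)
    rw [e1, e2]
    exact iInf₂_le m (Finset.mem_range.mpr (by omega))
  · have e1 : q' m = q (m + d) := by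
      by_cases h2 : m = i
      · subst h2
        simp only [hq'def, if_pos le_rfl, hq]
        congr 1
        omega
      · exact if_neg (by omega)
    have e2 : q' (m + 1) = q (m + d + 1) := by
      rw [hq'def]
      simp only [if_neg (show ¬ m + 1 ≤ i by omega)]
      congr 1
      omega
    rw [e1, e2]
    exact iInf₂_le (m + d) (Finset.mem_range.mpr (by omega))

omit [DecidableEq V] in
private lemma key (w : Matrix V V ℝ≥0∞) (u v : V) : ∀ k : ℕ,
    wsup w u v k ≤ ⨆ k' ∈ Finset.range (Fintype.card V), wsup w u v k' := by
  intro k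
  induction k using Nat.strong_induction_on with
  | _ k ih =>
    by_cases hk : k < Fintype.card V
    · exact le_biSup _ (Finset.mem_range.mpr hk)
    · refine iSup_le fun q => ?_
      have hcardpos : 0 < Fintype.card V := Fintype.card_pos_iff.mpr ⟨u⟩
      have hcard : Fintype.card V < Fintype.card (Fin (k + 1)) := by
        simp only [Fintype.card_fin]; omega
      obtain ⟨a, b, hab, hqab⟩ :=
        Fintype.exists_ne_map_eq_of_card_lt (fun m : Fin (k + 1) => q.1 m.val) hcard
      have hwalk : wcost w q.1 k ≤ wsup w u v (k - (max a.val b.val - min a.val b.val)) := by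
        rcases lt_or_gt_of_ne (fun h : a.val = b.val => hab (Fin.ext h)) with h | h
        · have := shortcut w u v q.1 k a.val b.val q.2.1 q.2.2 h (by omega) hqab
          simpa [Nat.max_eq_right h.le, Nat.min_eq_left h.le] using this
        · have := shortcut w u v q.1 k b.val a.val q.2.1 q.2.2 h (by omega) hqab.symm
          simpa [Nat.max_eq_left h.le, Nat.min_eq_right h.le] using this
      refine hwalk.trans (ih _ ?_)
      have : min a.val b.val < max a.val b.val := by
        rcases lt_or_gt_of_ne (fun h : a.val = b.val => hab (Fin.ext h)) with h | h <;> omega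
      omega

end Aux

theorem widest_path_restricted_to_simple_paths {V : Type*} [Fintype V] [DecidableEq V]
    (w : Matrix V V ℝ≥0∞) (u v : V) :
    (⨆ k : ℕ, ⨆ p : {p : Fin (k + 1) → V // p 0 = u ∧ p (Fin.last k) = v},
        ⨅ i : Fin k, w (p.1 i.castSucc) (p.1 i.succ)) =
      ⨆ k ∈ Finset.range (Fintype.card V),
        ⨆ p : {p : Fin (k + 1) → V // p 0 = u ∧ p (Fin.last k) = v},
          ⨅ i : Fin k, w (p.1 i.castSucc) (p.1 i.succ) := by
  have conv : ∀ k : ℕ, (⨆ p : {p : Fin (k + 1) → V // p 0 = u ∧ p (Fin.last k) = v},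
      ⨅ i : Fin k, w (p.1 i.castSucc) (p.1 i.succ)) = wsup w u v k := by
    intro k
    apply le_antisymm
    · refine iSup_le fun p => ?_
      set q : ℕ → V := fun n => p.1 ⟨min n k, by omega⟩ with hqdef
      have hq0 : q 0 = u := by
        have : (⟨min 0 k, by omega⟩ : Fin (k + 1)) = 0 := by
          ext; simp
        rw [hqdef]; simp only [this]; exact p.2.1
      have hqk : q k = v := by
        have : (⟨min k k, by omega⟩ : Fin (k + 1)) = Fin.last k := by
          ext; simp [Fin.last]
        rw [hqdef]; simp only [this]; exact p.2.2
      refine le_trans ?_ (le_iSup (fun q : {q : ℕ → V // q 0 = u ∧ q k = v} => wcost w q.1 k)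
        ⟨q, hq0, hqk⟩)
      refine le_iInf₂ fun m hm => ?_
      rw [Finset.mem_range] at hm
      have e1 : q m = p.1 (Fin.castSucc ⟨m, hm⟩) := by
        show p.1 ⟨min m k, by omega⟩ = p.1 (Fin.castSucc ⟨m, hm⟩)
        have h : (⟨min m k, by omega⟩ : Fin (k + 1)) = Fin.castSucc ⟨m, hm⟩ :=
          Fin.ext (by simp only [Fin.castSucc_mk]; omega)
        rw [h]
      have e2 : q (m + 1) = p.1 (Fin.succ ⟨m, hm⟩) := by
        show p.1 ⟨min (m + 1) k, by omega⟩ = p.1 (Fin.succ ⟨m, hm⟩)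
        have h : (⟨min (m + 1) k, by omega⟩ : Fin (k + 1)) = Fin.succ ⟨m, hm⟩ :=
          Fin.ext (by simp only [Fin.succ_mk]; omega)
        rw [h]
      show (⨅ i : Fin k, w (p.1 i.castSucc) (p.1 i.succ)) ≤ w (q m) (q (m + 1))
      rw [e1, e2]
      exact iInf_le (fun i : Fin k => w (p.1 i.castSucc) (p.1 i.succ)) ⟨m, hm⟩
    · refine iSup_le fun q => ?_
      refine le_trans ?_ (le_iSup (fun p : {p : Fin (k + 1) → V // p 0 = u ∧ p (Fin.last k) = v} =>
        ⨅ i : Fin k, w (p.1 i.castSucc) (p.1 i.succ))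
        ⟨fun i => q.1 i.val, q.2.1, q.2.2⟩)
      refine le_iInf fun i => ?_
      exact iInf₂_le i.val (Finset.mem_range.mpr i.isLt)
  simp only [conv]
  apply le_antisymm
  · exact iSup_le (key w u v)
  · exact iSup₂_le fun k _ => le_iSup _ k
end

section
/- (At most |V| Bellman–Ford iterations are needed for the most reliable path, since only simple paths matter.) Assume w x y ≤ 1 for all x, y : V. Then for all vertices u, v : V, the supremum over all walks of any length of the product of edge probabilities along the walk equals the supremum restricted to walks of length at most Fintype.card V - 1: ⨆_{k : ℕ} ⨆ over all walks p of length k from u to v of ∏_{i=0}^{k-1} w (p i) (p (i+1)) = ⨆_{k ∈ Finset.range (Fintype.card V)} ⨆ over all walks p of length k from u to v of ∏_{i=0}^{k-1} w (p i) (p (i+1)), where the empty product for k = 0 is 1. -/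
open ENNReal

private def eMap (k' d i : ℕ) (m : Fin k') : Fin (k' + d) :=
  ⟨if m.1 < i then m.1 else m.1 + d, by have := m.2; split <;> omega⟩

private def qMap {V : Type*} {k' d : ℕ} (p : Fin (k' + d + 1) → V) (i : ℕ) :
    Fin (k' + 1) → V :=
  fun m => p ⟨if m.1 < i then m.1 else m.1 + d, by have := m.2; split <;> omega⟩

private lemma splice_aux {V : Type*} (w : Matrix V V ℝ≥0∞) (hw : ∀ x y : V, w x y ≤ 1)
    {k' d : ℕ} (hd : 0 < d) (p : Fin (k' + d + 1) → V) (i : ℕ) (hi : i ≤ k')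
    (hp : p ⟨i, by omega⟩ = p ⟨i + d, by omega⟩) :
    ∃ q : Fin (k' + 1) → V, q 0 = p 0 ∧ q (Fin.last k') = p (Fin.last (k' + d)) ∧
      (∏ a : Fin (k' + d), w (p a.castSucc) (p a.succ)) ≤
        ∏ m : Fin k', w (q m.castSucc) (q m.succ) := by
  refine ⟨qMap p i, ?_, ?_, ?_⟩
  · by_cases h0 : 0 < i
    · refine congrArg p (Fin.ext ?_)
      simp [qMap, h0]
    · have hi0 : i = 0 := by omega
      subst hi0
      show p _ = p 0
      rw [show (⟨if (0 : Fin (k'+1)).1 < 0 then (0 : Fin (k'+1)).1 else (0 : Fin (k'+1)).1 + d,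
        by simp⟩ : Fin (k' + d + 1)) = ⟨0 + d, by omega⟩ from Fin.ext (by simp)]
      rw [← hp]
      exact congrArg p (Fin.ext rfl)
  · refine congrArg p (Fin.ext ?_)
    simp only [qMap, Fin.last]
    split_ifs <;> omega
  · have heinj : Function.Injective (eMap k' d i) := by
      intro a b hab
      have ha := a.2; have hb := b.2
      apply Fin.ext
      have := congrArg Fin.val hab
      simp only [eMap] at this
      split at this <;> split at this <;> omega
    have step1 : (∏ a : Fin (k' + d), w (p a.castSucc) (p a.succ)) ≤
        ∏ a ∈ Finset.univ.image (eMap k' d i), w (p a.castSucc) (p a.succ) := by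
      rw [← Finset.prod_mul_prod_compl (Finset.univ.image (eMap k' d i))
        (fun a => w (p a.castSucc) (p a.succ))]
      calc (∏ a ∈ Finset.univ.image (eMap k' d i), w (p a.castSucc) (p a.succ)) *
            ∏ a ∈ (Finset.univ.image (eMap k' d i))ᶜ, w (p a.castSucc) (p a.succ)
          ≤ (∏ a ∈ Finset.univ.image (eMap k' d i), w (p a.castSucc) (p a.succ)) * 1 := by
            gcongr
            exact Finset.prod_le_one (fun _ _ => zero_le) (fun a _ => hw _ _)
        _ = _ := mul_one _
    rw [Finset.prod_image (fun a _ b _ h => heinj h)] at step1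
    refine step1.trans_eq (Finset.prod_congr rfl fun m _ => ?_)
    have hm := m.2
    have hc : p ((eMap k' d i m).castSucc) = (qMap p i) m.castSucc := by
      refine congrArg p (Fin.ext ?_)
      simp only [qMap, eMap, Fin.coe_castSucc]
    have hs : p ((eMap k' d i m).succ) = (qMap p i) m.succ := by
      rcases lt_trichotomy (m.1 + 1) i with h | h | h
      · refine congrArg p (Fin.ext ?_)
        simp only [qMap, eMap, Fin.val_succ]
        split_ifs <;> omega
      · have h1 : (eMap k' d i m).succ = ⟨i, by omega⟩ := by
          apply Fin.ext
          simp only [eMap, Fin.val_succ]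
          split_ifs <;> omega
        have h2 : (qMap p i) m.succ = p ⟨i + d, by omega⟩ := by
          refine congrArg p (Fin.ext ?_)
          simp only [qMap, Fin.val_succ]
          split_ifs <;> omega
        rw [h1, h2, hp]
      · refine congrArg p (Fin.ext ?_)
        simp only [qMap, eMap, Fin.val_succ]
        split_ifs <;> omega
    rw [hc, hs]

theorem most_reliable_path_restricted_to_simple_paths {V : Type*} [Fintype V] [DecidableEq V]
    (w : Matrix V V ℝ≥0∞) (hw : ∀ x y : V, w x y ≤ 1) (u v : V) :
    (⨆ k : ℕ, ⨆ p : {p : Fin (k + 1) → V // p 0 = u ∧ p (Fin.last k) = v},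
        ∏ i : Fin k, w (p.1 i.castSucc) (p.1 i.succ)) =
      ⨆ k ∈ Finset.range (Fintype.card V),
        ⨆ p : {p : Fin (k + 1) → V // p 0 = u ∧ p (Fin.last k) = v},
          ∏ i : Fin k, w (p.1 i.castSucc) (p.1 i.succ) := by
  apply le_antisymm
  · apply iSup_le
    intro k
    induction k using Nat.strong_induction_on with
    | _ k ih =>
      by_cases hk : k < Fintype.card V
      · exact le_iSup₂_of_le k (Finset.mem_range.mpr hk) le_rfl
      · push_neg at hk
        apply iSup_le
        rintro ⟨p, hp0, hpl⟩
        have hcard : Fintype.card V < Fintype.card (Fin (k + 1)) := by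
          simp; omega
        obtain ⟨a, b, hne, hpab⟩ := Fintype.exists_ne_map_eq_of_card_lt p hcard
        have key : ∀ i j : ℕ, (hj : j ≤ k) → (hij : i < j) →
            p ⟨i, by omega⟩ = p ⟨j, by omega⟩ →
            (∏ a : Fin k, w (p a.castSucc) (p a.succ)) ≤
              ⨆ k ∈ Finset.range (Fintype.card V),
                ⨆ p : {p : Fin (k + 1) → V // p 0 = u ∧ p (Fin.last k) = v},
                  ∏ i : Fin k, w (p.1 i.castSucc) (p.1 i.succ) := by
          intro i j hj hij hpij
          obtain ⟨d, hd0, rfl⟩ : ∃ d, 0 < d ∧ j = i + d := ⟨j - i, by omega, by omega⟩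
          obtain ⟨k', rfl⟩ : ∃ k', k = k' + d := ⟨k - d, by omega⟩
          obtain ⟨q, hq0, hql, hle⟩ := splice_aux w hw hd0 p i (by omega) hpij
          refine hle.trans (le_trans ?_ (ih k' (by omega)))
          exact le_iSup_of_le ⟨q, by rw [hq0, hp0], by rw [hql, hpl]⟩ le_rfl
        rcases lt_or_gt_of_ne (fun h : a.1 = b.1 => hne (Fin.ext h)) with h | h
        · exact key a.1 b.1 (by have := b.2; omega) h hpab
        · exact key b.1 a.1 (by have := a.2; omega) h hpab.symm
  · exact iSup₂_le fun k _ =>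
      le_iSup (fun k => ⨆ p : {p : Fin (k + 1) → V // p 0 = u ∧ p (Fin.last k) = v},
        ∏ i : Fin k, w (p.1 i.castSucc) (p.1 i.succ)) k
end
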